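/- arXiv:1702.06488 — 2 statements merged into one kernel-verified Lean document; each statement's English description precedes it below -/
import Mathlib

section
/- Let U, V ∈ ℝ^{d×K} have orthonormal columns, let P_U = UUᵀ and P_V = VVᵀ, and let H = VᵀU with matrix sign function Ĥ = sgn(H). If ‖P_U − P_V‖₂ < 1, then Ĥ is orthonormal and ‖VĤ − U‖_F² = 2‖H − Ĥ‖_*, where ‖·‖_* is the nuclear norm. -/
open Matrix BigOperators

/-- Squared Frobenius norm of a real matrix. -/
noncomputable def frobSq {m n : Type*} [Fintype m] [Fintype n] (A : Matrix m n ℝ) : ℝ :=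
  ∑ i, ∑ j, (A i j) ^ 2

/-- Spectral norm (ℓ² operator norm) of a real matrix. -/
noncomputable def specNorm {m n : Type*} [Fintype m] [Fintype n] [DecidableEq n]
    (A : Matrix m n ℝ) : ℝ :=
  ‖LinearMap.toContinuousLinearMap (Matrix.toEuclideanLin A)‖

private lemma dot_mulVec_mulVec {m n : Type*} [Fintype m] [Fintype n]
    (A : Matrix m n ℝ) (x y : n → ℝ) :
    (A *ᵥ x) ⬝ᵥ (A *ᵥ y) = x ⬝ᵥ ((Aᵀ * A) *ᵥ y) := by
  rw [← Matrix.mulVec_mulVec, Matrix.dotProduct_mulVec, Matrix.vecMul_mulVec,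
    ← Matrix.dotProduct_mulVec, Matrix.mulVec_mulVec]

private lemma dot_self_nonneg {n : Type*} [Fintype n] (x : n → ℝ) : 0 ≤ x ⬝ᵥ x :=
  Finset.sum_nonneg fun i _ => mul_self_nonneg _

private lemma frobSq_eq_trace {m n : Type*} [Fintype m] [Fintype n]
    (A : Matrix m n ℝ) : frobSq A = Matrix.trace (Aᵀ * A) := by
  simp only [frobSq, Matrix.trace, Matrix.diag, Matrix.mul_apply, Matrix.transpose_apply]
  rw [Finset.sum_comm]
  simp [sq]

/-- Let `U, V` have orthonormal columns, `H = VᵀU` with SVD `H = P diag(σ) Qᵀ`, and let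
`Ĥ = sgn(H) = P diag(1_{σⱼ>0}) Qᵀ` be the matrix sign of `H`.  If `‖UUᵀ − VVᵀ‖₂ < 1`,
then `Ĥ` is orthonormal and `‖VĤ − U‖_F² = 2‖H − Ĥ‖_*`, where the nuclear norm of
`H − Ĥ = P diag(σⱼ − 1_{σⱼ>0}) Qᵀ` equals `∑ⱼ |σⱼ − 1_{σⱼ>0}|`. -/
theorem matrix_sign_alignment {d K : ℕ} (U V : Matrix (Fin d) (Fin K) ℝ)
    (hU : Uᵀ * U = 1) (hV : Vᵀ * V = 1)
    (P Q : Matrix (Fin K) (Fin K) ℝ) (σ : Fin K → ℝ)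
    (hP : Pᵀ * P = 1) (hQ : Qᵀ * Q = 1) (hσ0 : ∀ j, 0 ≤ σ j)
    (hSVD : Vᵀ * U = P * Matrix.diagonal σ * Qᵀ)
    (Hhat : Matrix (Fin K) (Fin K) ℝ)
    (hHhat : Hhat = P * Matrix.diagonal (fun j => if 0 < σ j then (1 : ℝ) else 0) * Qᵀ)
    (hlt : specNorm (U * Uᵀ - V * Vᵀ) < 1) :
    Hhatᵀ * Hhat = 1 ∧
    frobSq (V * Hhat - U) = 2 * ∑ j, |σ j - (if 0 < σ j then (1 : ℝ) else 0)| := by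
  -- column dot products
  have hee : ∀ j : Fin K, (Pi.single j (1:ℝ)) ⬝ᵥ (Pi.single j (1:ℝ)) = 1 := by
    intro j; simp
  -- Step 1: all singular values are positive
  have hpos : ∀ j, 0 < σ j := by
    intro j
    by_contra h
    have hσj : σ j = 0 := le_antisymm (not_lt.mp h) (hσ0 j)
    set e : Fin K → ℝ := Pi.single j 1 with he
    set q : Fin K → ℝ := Q *ᵥ e with hq
    set y : Fin d → ℝ := U *ᵥ q with hy
    have hq1 : q ⬝ᵥ q = 1 := by
      rw [hq, dot_mulVec_mulVec, hQ, Matrix.one_mulVec, hee]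
    have hy1 : y ⬝ᵥ y = 1 := by
      rw [hy, dot_mulVec_mulVec, hU, Matrix.one_mulVec, hq1]
    have hVy : Vᵀ *ᵥ y = 0 := by
      rw [hy, hq, Matrix.mulVec_mulVec, Matrix.mulVec_mulVec, hSVD,
        Matrix.mul_assoc (P * Matrix.diagonal σ), hQ, Matrix.mul_one,
        ← Matrix.mulVec_mulVec, he, Matrix.diagonal_mulVec_single, hσj]
      simp
    have hAy : (U * Uᵀ - V * Vᵀ) *ᵥ y = y := by
      rw [Matrix.sub_mulVec]
      have h1 : (U * Uᵀ) *ᵥ y = y := by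
        rw [hy, Matrix.mulVec_mulVec, Matrix.mul_assoc, hU, Matrix.mul_one]
      have h2 : (V * Vᵀ) *ᵥ y = 0 := by
        rw [← Matrix.mulVec_mulVec, hVy, Matrix.mulVec_zero]
      rw [h1, h2, sub_zero]
    set x : EuclideanSpace ℝ (Fin d) := (WithLp.equiv 2 (Fin d → ℝ)).symm y with hx
    have hnx : ‖x‖ = 1 := by
      rw [EuclideanSpace.norm_eq]
      have : ∑ i, ‖x i‖ ^ 2 = y ⬝ᵥ y := by
        simp [dotProduct, hx, sq, Real.norm_eq_abs, abs_mul_abs_self]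
      rw [this, hy1, Real.sqrt_one]
    have hLx : (LinearMap.toContinuousLinearMap
        (Matrix.toEuclideanLin (U * Uᵀ - V * Vᵀ))) x = x := by
      show Matrix.toEuclideanLin (U * Uᵀ - V * Vᵀ) x = x
      rw [Matrix.toEuclideanLin_apply]
      have : x.ofLp = y := rfl
      rw [this, hAy]
      rfl
    have hle := (LinearMap.toContinuousLinearMap
        (Matrix.toEuclideanLin (U * Uᵀ - V * Vᵀ))).le_opNorm x
    rw [hLx, hnx, mul_one] at hle
    exact absurd (lt_of_le_of_lt hle hlt) (by norm_num)
  -- the sign diagonal is the identity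
  have hdiag : (fun j => if 0 < σ j then (1:ℝ) else 0) = fun _ => (1:ℝ) := by
    funext j; simp [hpos j]
  have hHhat' : Hhat = P * Qᵀ := by
    rw [hHhat, hdiag, Matrix.diagonal_one, Matrix.mul_one]
  have hQQ : Q * Qᵀ = 1 := mul_eq_one_comm.mp hQ
  have hpart1 : Hhatᵀ * Hhat = 1 := by
    rw [hHhat', Matrix.transpose_mul, Matrix.transpose_transpose,
      Matrix.mul_assoc, ← Matrix.mul_assoc Pᵀ, hP, Matrix.one_mul]
    exact hQQ
  refine ⟨hpart1, ?_⟩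
  -- Step 3: σ j ≤ 1
  have hle1 : ∀ j, σ j ≤ 1 := by
    intro j
    set e : Fin K → ℝ := Pi.single j 1 with he
    set q : Fin K → ℝ := Q *ᵥ e with hq
    set y : Fin d → ℝ := U *ᵥ q with hy
    have hq1 : q ⬝ᵥ q = 1 := by
      rw [hq, dot_mulVec_mulVec, hQ, Matrix.one_mulVec, hee]
    have hy1 : y ⬝ᵥ y = 1 := by
      rw [hy, dot_mulVec_mulVec, hU, Matrix.one_mulVec, hq1]
    set p : Fin K → ℝ := P *ᵥ e with hp
    have hp1 : p ⬝ᵥ p = 1 := by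
      rw [hp, dot_mulVec_mulVec, hP, Matrix.one_mulVec, hee]
    have hVy : Vᵀ *ᵥ y = σ j • p := by
      rw [hy, hq, Matrix.mulVec_mulVec, Matrix.mulVec_mulVec, hSVD,
        Matrix.mul_assoc (P * Matrix.diagonal σ), hQ, Matrix.mul_one,
        ← Matrix.mulVec_mulVec, he, Matrix.diagonal_mulVec_single, mul_one, hp]
      have hsingle : (Pi.single j (σ j) : Fin K → ℝ) = σ j • (Pi.single j 1 : Fin K → ℝ) := by
        funext i
        by_cases hij : i = j
        · subst hij; simp
        · simp [Pi.single_eq_of_ne hij]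
      rw [hsingle, Matrix.mulVec_smul]
    -- σ j ^ 2 = yᵀ V Vᵀ y
    have hsq : y ⬝ᵥ ((V * Vᵀ) *ᵥ y) = σ j ^ 2 := by
      have h1 : (Vᵀ *ᵥ y) ⬝ᵥ (Vᵀ *ᵥ y) = y ⬝ᵥ ((V * Vᵀ) *ᵥ y) := by
        have := dot_mulVec_mulVec Vᵀ y y
        rwa [Matrix.transpose_transpose] at this
      rw [← h1, hVy, smul_dotProduct, dotProduct_smul, hp1]
      simp [smul_eq_mul, sq]
    -- positivity of the residual
    have hres : 0 ≤ 1 - σ j ^ 2 := by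
      have hidem : (V * Vᵀ)ᵀ * (V * Vᵀ) = V * Vᵀ := by
        rw [Matrix.transpose_mul, Matrix.transpose_transpose,
          Matrix.mul_assoc, ← Matrix.mul_assoc Vᵀ, hV, Matrix.one_mul]
      have hw := dot_self_nonneg (y - (V * Vᵀ) *ᵥ y)
      have hexp : (y - (V * Vᵀ) *ᵥ y) ⬝ᵥ (y - (V * Vᵀ) *ᵥ y) = 1 - σ j ^ 2 := by
        have h2 : ((V * Vᵀ) *ᵥ y) ⬝ᵥ ((V * Vᵀ) *ᵥ y) = σ j ^ 2 := by
          rw [dot_mulVec_mulVec, hidem, hsq]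
        have h3 : ((V * Vᵀ) *ᵥ y) ⬝ᵥ y = σ j ^ 2 := by
          rw [dotProduct_comm, hsq]
        rw [sub_dotProduct, dotProduct_sub, dotProduct_sub,
          hy1, hsq, h2, h3]
        ring
      rwa [hexp] at hw
    nlinarith [hσ0 j]
  -- Step 4: trace computation
  have htr : Matrix.trace (Hhatᵀ * (Vᵀ * U)) = ∑ j, σ j := by
    rw [hSVD, hHhat', Matrix.transpose_mul, Matrix.transpose_transpose]
    have hthis : Q * Pᵀ * (P * Matrix.diagonal σ * Qᵀ)
        = Q * (Matrix.diagonal σ * Qᵀ) := by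
      simp only [Matrix.mul_assoc]
      rw [← Matrix.mul_assoc Pᵀ P, hP, Matrix.one_mul]
    rw [hthis, Matrix.trace_mul_comm, Matrix.mul_assoc, hQ, Matrix.mul_one,
      Matrix.trace_diagonal]
  have hexpand : (V * Hhat - U)ᵀ * (V * Hhat - U)
      = 1 - Hhatᵀ * (Vᵀ * U) - (Hhatᵀ * (Vᵀ * U))ᵀ + 1 := by
    have hVH : (V * Hhat)ᵀ * (V * Hhat) = 1 := by
      rw [Matrix.transpose_mul, Matrix.mul_assoc, ← Matrix.mul_assoc Vᵀ, hV,
        Matrix.one_mul, hpart1]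
    have hUVH : Uᵀ * (V * Hhat) = (Hhatᵀ * (Vᵀ * U))ᵀ := by
      simp [Matrix.transpose_mul, Matrix.mul_assoc]
    have hVHU : (V * Hhat)ᵀ * U = Hhatᵀ * (Vᵀ * U) := by
      rw [Matrix.transpose_mul, Matrix.mul_assoc]
    rw [Matrix.transpose_sub, Matrix.sub_mul, Matrix.mul_sub, Matrix.mul_sub,
      hVH, hUVH, hVHU, hU]
    abel
  rw [frobSq_eq_trace, hexpand]
  have hab : ∀ j, |σ j - (if 0 < σ j then (1:ℝ) else 0)| = 1 - σ j := by
    intro j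
    rw [if_pos (hpos j), abs_of_nonpos (by linarith [hle1 j])]
    ring
  simp only [Matrix.trace_add, Matrix.trace_sub, Matrix.trace_transpose, htr, hab,
    Matrix.trace_one]
  push_cast
  rw [Finset.sum_sub_distrib]
  simp [Finset.card_univ]
  ring
end

section
/- Let U ∈ ℝ^{d×K} have orthonormal columns and let W ∈ ℝ^{d×K} be arbitrary. Then ‖WUᵀ + UWᵀ‖_F ≤ √2·‖(I − UUᵀ)W‖_F + 2‖UUᵀW‖_F. -/
set_option linter.unusedSectionVars false


open Matrix BigOperators

/-- Frobenius norm of a real matrix. -/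
noncomputable def frob {m n : Type*} [Fintype m] [Fintype n] (A : Matrix m n ℝ) : ℝ :=
  Real.sqrt (frobSq A)

namespace FrobAux

variable {m n p : Type*} [Fintype m] [Fintype n] [Fintype p] [DecidableEq m] [DecidableEq n] [DecidableEq p]

lemma frobSq_eq_trace (A : Matrix m n ℝ) : frobSq A = Matrix.trace (Aᵀ * A) := by
  simp only [frobSq, Matrix.trace, Matrix.diag, Matrix.mul_apply, Matrix.transpose_apply,
    pow_two]
  rw [Finset.sum_comm]

/-- Matrix as element of Euclidean space. -/
noncomputable def toE (A : Matrix m n ℝ) : EuclideanSpace ℝ (m × n) := WithLp.toLp 2 (fun q : m × n => A q.1 q.2)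

lemma frob_eq_norm (A : Matrix m n ℝ) : frob A = ‖toE A‖ := by
  rw [frob, EuclideanSpace.norm_eq]
  congr 1
  rw [frobSq, ← Finset.sum_product']
  refine Finset.sum_congr rfl fun q _ => ?_
  simp [toE, sq_abs]

lemma frob_add_le (A B : Matrix m n ℝ) : frob (A + B) ≤ frob A + frob B := by
  have h : toE (A + B) = toE A + toE B := by ext q; rfl
  rw [frob_eq_norm, frob_eq_norm, frob_eq_norm, h]
  exact norm_add_le _ _

lemma frobSq_transpose (A : Matrix m n ℝ) : frobSq Aᵀ = frobSq A := by
  rw [frobSq, frobSq]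
  rw [Finset.sum_comm]
  rfl

lemma frobSq_mul_Ut (A : Matrix p n ℝ) (U : Matrix m n ℝ) (hU : Uᵀ * U = 1) :
    frobSq (A * Uᵀ) = frobSq A := by
  rw [frobSq_eq_trace, frobSq_eq_trace, Matrix.transpose_mul, Matrix.transpose_transpose]
  calc Matrix.trace (U * Aᵀ * (A * Uᵀ))
      = Matrix.trace (U * (Aᵀ * A * Uᵀ)) := by rw [Matrix.mul_assoc, Matrix.mul_assoc]
    _ = Matrix.trace (Aᵀ * A * Uᵀ * U) := Matrix.trace_mul_comm _ _
    _ = Matrix.trace (Aᵀ * A) := by rw [Matrix.mul_assoc, hU, Matrix.mul_one]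

lemma frobSq_U_mul (A : Matrix p n ℝ) (U : Matrix m n ℝ) (hU : Uᵀ * U = 1) :
    frobSq (U * Aᵀ) = frobSq A := by
  rw [frobSq_eq_trace, Matrix.transpose_mul, Matrix.transpose_transpose]
  calc Matrix.trace (A * Uᵀ * (U * Aᵀ))
      = Matrix.trace (A * (Uᵀ * U) * Aᵀ) := by
        rw [Matrix.mul_assoc, Matrix.mul_assoc, Matrix.mul_assoc]
    _ = Matrix.trace (Aᵀᵀ * Aᵀ) := by
        rw [hU, Matrix.mul_one, Matrix.transpose_transpose]
    _ = frobSq Aᵀ := (frobSq_eq_trace _).symm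
    _ = frobSq A := frobSq_transpose _

lemma frobSq_sym (B U : Matrix m n ℝ) (hU : Uᵀ * U = 1) (hUB : Uᵀ * B = 0) :
    frobSq (B * Uᵀ + U * Bᵀ) = 2 * frobSq B := by
  have hBU : Bᵀ * U = 0 := by
    have := congrArg Matrix.transpose hUB
    simpa [Matrix.transpose_mul] using this
  rw [frobSq_eq_trace]
  have hT : (B * Uᵀ + U * Bᵀ)ᵀ = B * Uᵀ + U * Bᵀ := by
    simp [Matrix.transpose_add, Matrix.transpose_mul, add_comm]
  rw [hT]
  have hexp : (B * Uᵀ + U * Bᵀ) * (B * Uᵀ + U * Bᵀ)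
      = B * Bᵀ + U * (Bᵀ * B) * Uᵀ := by
    rw [Matrix.add_mul, Matrix.mul_add, Matrix.mul_add]
    have e1 : B * Uᵀ * (B * Uᵀ) = 0 := by
      rw [Matrix.mul_assoc, ← Matrix.mul_assoc Uᵀ, hUB, Matrix.zero_mul, Matrix.mul_zero]
    have e2 : U * Bᵀ * (U * Bᵀ) = 0 := by
      rw [Matrix.mul_assoc, ← Matrix.mul_assoc Bᵀ, hBU, Matrix.zero_mul, Matrix.mul_zero]
    have e3 : B * Uᵀ * (U * Bᵀ) = B * Bᵀ := by
      rw [Matrix.mul_assoc, ← Matrix.mul_assoc Uᵀ, hU, Matrix.one_mul]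
    have e4 : U * Bᵀ * (B * Uᵀ) = U * (Bᵀ * B) * Uᵀ := by
      rw [Matrix.mul_assoc, Matrix.mul_assoc, Matrix.mul_assoc]
    rw [e1, e2, e3, e4]
    abel
  rw [hexp, Matrix.trace_add]
  have t1 : Matrix.trace (B * Bᵀ) = frobSq B := by
    rw [Matrix.trace_mul_comm, ← frobSq_eq_trace]
  have t2 : Matrix.trace (U * (Bᵀ * B) * Uᵀ) = frobSq B := by
    rw [Matrix.mul_assoc, Matrix.trace_mul_comm, Matrix.mul_assoc, hU, Matrix.mul_one,
      ← frobSq_eq_trace]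
  rw [t1, t2]; ring

end FrobAux

open FrobAux in
/-- Let `U ∈ ℝ^{d×K}` have orthonormal columns and `W ∈ ℝ^{d×K}` be arbitrary. Then
`‖WUᵀ + UWᵀ‖_F ≤ √2 ‖(I − UUᵀ)W‖_F + 2 ‖UUᵀW‖_F`. -/
theorem frob_WUt_add_UWt_le {d K : ℕ} (U W : Matrix (Fin d) (Fin K) ℝ)
    (hU : Uᵀ * U = 1) :
    frob (W * Uᵀ + U * Wᵀ) ≤
      Real.sqrt 2 * frob (((1 : Matrix (Fin d) (Fin d) ℝ) - U * Uᵀ) * W) +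
      2 * frob (U * Uᵀ * W) := by
  obtain ⟨B, hB⟩ : ∃ B, B = ((1 : Matrix (Fin d) (Fin d) ℝ) - U * Uᵀ) * W := ⟨_, rfl⟩
  obtain ⟨C, hC⟩ : ∃ C, C = U * Uᵀ * W := ⟨_, rfl⟩
  have hW : W = B + C := by
    rw [hB, hC, Matrix.sub_mul, Matrix.one_mul]
    abel
  have hUB : Uᵀ * B = 0 := by
    rw [hB, ← Matrix.mul_assoc, Matrix.mul_sub, Matrix.mul_one, ← Matrix.mul_assoc, hU,
      Matrix.one_mul, sub_self, Matrix.zero_mul]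
  have hsum : W * Uᵀ + U * Wᵀ = (B * Uᵀ + U * Bᵀ) + (C * Uᵀ + U * Cᵀ) := by
    rw [hW, Matrix.add_mul, Matrix.transpose_add, Matrix.mul_add]
    abel
  have step1 : frob (W * Uᵀ + U * Wᵀ)
      ≤ frob (B * Uᵀ + U * Bᵀ) + frob (C * Uᵀ + U * Cᵀ) := by
    rw [hsum]; exact frob_add_le _ _
  have step2 : frob (B * Uᵀ + U * Bᵀ) = Real.sqrt 2 * frob B := by
    rw [frob, frobSq_sym B U hU hUB, Real.sqrt_mul (by norm_num), frob]
  have step3 : frob (C * Uᵀ + U * Cᵀ) ≤ 2 * frob C := by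
    have h := frob_add_le (C * Uᵀ) (U * Cᵀ)
    have e1 : frob (C * Uᵀ) = frob C := by rw [frob, frobSq_mul_Ut C U hU, frob]
    have e2 : frob (U * Cᵀ) = frob C := by rw [frob, frobSq_U_mul C U hU, frob]
    rw [e1, e2] at h
    linarith
  rw [← hB, ← hC]
  calc frob (W * Uᵀ + U * Wᵀ) ≤ frob (B * Uᵀ + U * Bᵀ) + frob (C * Uᵀ + U * Cᵀ) := step1
    _ ≤ Real.sqrt 2 * frob B + 2 * frob C := by rw [step2]; linarith
end
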